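/- Rigidity for normalized weight: let (G,m,w,B) be a connected finite weighted graph with boundary with normalized weight (Deg(x) = 1 for all x ∈ V), satisfying CD(K,n) with K > 0, n > 1, and σ₂ = nK/(n−1). Then n = ∞, K = 1, the interior induces no edges (E(Ω,Ω) = ∅), and Deg_b(x) = 1 for every interior vertex. -/

import Mathlib

open Finset

variable {V : Type*} [Fintype V] [DecidableEq V]

/-- The weighted graph Laplacian: `Δu(x) = (1/m x) ∑_y (u y - u x) w x y`. -/
noncomputable def glap (m : V → ℝ) (w : V → V → ℝ) (u : V → ℝ) (x : V) : ℝ :=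
  (1 / m x) * ∑ y, (u y - u x) * w x y

/-- The carré du champ operator `Γ(u,v) = (1/2)(Δ(uv) - vΔu - uΔv)`. -/
noncomputable def gGam (m : V → ℝ) (w : V → V → ℝ) (u v : V → ℝ) (x : V) : ℝ :=
  (1 / 2) * (glap m w (fun z => u z * v z) x - v x * glap m w u x - u x * glap m w v x)

/-- The iterated carré du champ `Γ₂(u,v) = (1/2)(ΔΓ(u,v) - Γ(Δu,v) - Γ(u,Δv))`. -/
noncomputable def gGam2 (m : V → ℝ) (w : V → V → ℝ) (u v : V → ℝ) (x : V) : ℝ :=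
  (1 / 2) * (glap m w (gGam m w u v) x - gGam m w (glap m w u) v x - gGam m w u (glap m w v) x)

/-- Vertex inner product `⟨u,v⟩ = ∑_x u x v x m x`. -/
noncomputable def vip (m : V → ℝ) (u v : V → ℝ) : ℝ := ∑ x, u x * v x * m x

/-- Edge (1-form) inner product of differentials:
`⟨du,dv⟩ = ∑_{{x,y}∈E} (u y - u x)(v y - v x) w x y = (1/2)∑_{x,y}`. -/
noncomputable def eip (w : V → V → ℝ) (u v : V → ℝ) : ℝ :=
  (1 / 2) * ∑ x, ∑ y, (u y - u x) * (v y - v x) * w x y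

/-- `(m,w)` is a weighted graph structure: positive vertex measure, symmetric
nonnegative edge weights, no loops. -/
def WeightedGraph (m : V → ℝ) (w : V → V → ℝ) : Prop :=
  (∀ x, 0 < m x) ∧ (∀ x y, w x y = w y x) ∧ (∀ x y, 0 ≤ w x y) ∧ (∀ x, w x x = 0)

/-- The underlying simple graph: `x ∼ y` iff `w x y > 0`. -/
def wgraph (w : V → V → ℝ) : SimpleGraph V := SimpleGraph.fromRel (fun x y => 0 < w x y)

/-- The Bakry-Émery curvature-dimension condition `CD(K,n)`. -/
def CD (m : V → ℝ) (w : V → V → ℝ) (K n : ℝ) : Prop :=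
  ∀ (f : V → ℝ) (x : V), gGam2 m w f f x ≥ (1 / n) * (glap m w f x) ^ 2 + K * gGam m w f f x

/-- `B` is a vertex boundary: nonempty, independent, and every boundary vertex is
adjacent to some interior vertex. -/
def GraphBoundary (w : V → V → ℝ) (B : Finset V) : Prop :=
  B.Nonempty ∧ (∀ x ∈ B, ∀ y ∈ B, w x y = 0) ∧ (∀ x ∈ B, ∃ y, y ∉ B ∧ 0 < w x y)

/-- `σ` is a Steklov eigenvalue: there is `u`, harmonic on the interior, with
boundary restriction nonzero, and `∂u/∂n = σ u` on `B`. -/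
def SteklovEig (m : V → ℝ) (w : V → V → ℝ) (B : Finset V) (σ : ℝ) : Prop :=
  ∃ u : V → ℝ, (∃ x ∈ B, u x ≠ 0) ∧ (∀ x, x ∉ B → glap m w u x = 0) ∧
    (∀ x ∈ B, - glap m w u x = σ * u x)

/-- `μ` is an eigenvalue of `-Δ`. -/
def LapEig (m : V → ℝ) (w : V → V → ℝ) (μ : ℝ) : Prop :=
  ∃ u : V → ℝ, u ≠ 0 ∧ ∀ x, - glap m w u x = μ * u x

/-- The edge weight of the induced graph on the interior `Ω = Bᶜ`. -/
def wRes (B : Finset V) (w : V → V → ℝ) : V → V → ℝ :=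
  fun x y => if x ∈ B ∨ y ∈ B then 0 else w x y

open ENNReal in
/-- The coefficient `1/n` for the extended dimension parameter `n ∈ (1,∞]`,
equal to `0` when `n = ∞`. -/
noncomputable def cdC (n : ℝ≥0∞) : ℝ := (n⁻¹).toReal

open ENNReal in
/-- The Lichnerowicz constant `nK/(n-1)`, equal to `K` when `n = ∞`. -/
noncomputable def lich (n : ℝ≥0∞) (K : ℝ) : ℝ :=
  if n = ⊤ then K else n.toReal * K / (n.toReal - 1)

open ENNReal in
/-- The Bakry-Émery condition `CD(K,n)` for extended dimension `n ∈ (1,∞]`;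
for `n = ∞` the `(Δf)²/n` term is omitted. -/
def CDE (m : V → ℝ) (w : V → V → ℝ) (K : ℝ) (n : ℝ≥0∞) : Prop :=
  ∀ (f : V → ℝ) (x : V),
    gGam2 m w f f x ≥ cdC n * (glap m w f x) ^ 2 + K * gGam m w f f x

section StmtAux
set_option linter.unusedSectionVars false
variable (m : V → ℝ) (w : V → V → ℝ)

private lemma hcan1 (a s : ℝ) (ha : a ≠ 0) : a * (1/(2*a) * s) = (1/2) * s := by
  field_simp

private lemma hcan2 (a f s : ℝ) (ha : a ≠ 0) : a * (f * (1/a * s)) = f * s := by field_simp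

private lemma hcan3 (a s : ℝ) (ha : a ≠ 0) : a * (1/a * s) = s := by field_simp

private lemma gGam_eq' (u v : V → ℝ) (x : V) (hm : m x ≠ 0) :
    gGam m w u v x = 1/(2 * m x) * ∑ y, (u y - u x)*(v y - v x)*w x y := by
  have expand : ∑ y, (u y - u x)*(v y - v x)*w x y
      = (∑ y, (u y * v y - u x * v x) * w x y)
        - v x * ∑ y, (u y - u x) * w x y
        - u x * ∑ y, (v y - v x) * w x y := by
    rw [Finset.mul_sum, Finset.mul_sum, ← Finset.sum_sub_distrib, ← Finset.sum_sub_distrib]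
    exact Finset.sum_congr rfl fun y _ => by ring
  unfold gGam glap
  rw [expand]
  field_simp

private lemma gGam_eq2 (u v : V → ℝ) (x : V) (hm : m x ≠ 0) :
    gGam m w u v x = (1/2) * ((1/m x) * ∑ y, (u y - u x)*(v y - v x)*w x y) := by
  rw [gGam_eq' m w u v x hm]
  rw [show (1:ℝ)/(2 * m x) = (1/2) * (1/m x) from (one_div_mul_one_div 2 (m x)).symm]
  ring

private lemma gGam_comm (u v : V → ℝ) (x : V) : gGam m w u v x = gGam m w v u x := by
  unfold gGam
  rw [show (fun z => u z * v z) = (fun z => v z * u z) from funext fun z => mul_comm _ _]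
  ring

private lemma gGam_neg (u v : V → ℝ) (x : V) (hm : m x ≠ 0) :
    gGam m w (fun z => -u z) v x = - gGam m w u v x := by
  rw [gGam_eq' m w _ v x hm, gGam_eq' m w u v x hm]
  have h : ∑ y, (-u y - -u x)*(v y - v x)*w x y = ∑ y, -((u y - u x)*(v y - v x)*w x y) :=
    Finset.sum_congr rfl fun y _ => by ring
  rw [h, Finset.sum_neg_distrib]
  ring

private lemma glap_mul (u : V → ℝ) (x : V) (hm : m x ≠ 0) :
    m x * glap m w u x = ∑ y, (u y - u x) * w x y := by
  unfold glap; field_simp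

private lemma glap_split (u : V → ℝ) (x : V) (hm : m x ≠ 0) (hsum : ∑ y, w x y = m x) :
    glap m w u x = (1 / m x) * (∑ y, u y * w x y) - u x := by
  unfold glap
  have h : ∑ y, (u y - u x) * w x y = (∑ y, u y * w x y) - u x * m x := by
    rw [← hsum, Finset.mul_sum, ← Finset.sum_sub_distrib]
    exact Finset.sum_congr rfl fun y _ => by ring
  rw [h]; field_simp

private lemma sum_glap (hm : ∀ x, m x ≠ 0) (hsymm : ∀ x y, w x y = w y x) (f : V → ℝ) :
    ∑ x, m x * glap m w f x = 0 := by
  rw [Finset.sum_congr rfl fun x _ => glap_mul m w f x (hm x)]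
  have h2 : ∑ x, ∑ y, (f y - f x) * w x y = ∑ y, ∑ x, (f y - f x) * w x y := Finset.sum_comm
  have h3 : ∑ y, ∑ x, (f y - f x) * w x y = - ∑ x, ∑ y, (f y - f x) * w x y := by
    rw [← Finset.sum_neg_distrib]
    refine Finset.sum_congr rfl fun a _ => ?_
    rw [← Finset.sum_neg_distrib]
    refine Finset.sum_congr rfl fun b _ => ?_
    rw [hsymm b a]; ring
  linarith [h2, h3]

private lemma green (hm : ∀ x, m x ≠ 0) (hsymm : ∀ x y, w x y = w y x) (f g : V → ℝ) :
    ∑ x, m x * gGam m w f g x = - ∑ x, m x * (f x * glap m w g x) := by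
  have hL : ∀ x, m x * gGam m w f g x = (1/2) * ∑ y, (f y - f x)*(g y - g x)*w x y := by
    intro x
    rw [gGam_eq' m w f g x (hm x)]
    exact hcan1 _ _ (hm x)
  have hR : ∀ x, m x * (f x * glap m w g x) = ∑ y, f x * (g y - g x) * w x y := by
    intro x
    unfold glap
    rw [hcan2 (m x) (f x) _ (hm x), Finset.mul_sum]
    exact Finset.sum_congr rfl fun y _ => by ring
  rw [Finset.sum_congr rfl fun x _ => hL x, Finset.sum_congr rfl fun x _ => hR x]
  have swap : ∑ x, ∑ y, f y * (g y - g x) * w x y = - ∑ x, ∑ y, f x * (g y - g x) * w x y := by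
    rw [Finset.sum_comm, ← Finset.sum_neg_distrib]
    refine Finset.sum_congr rfl fun a _ => ?_
    rw [← Finset.sum_neg_distrib]
    refine Finset.sum_congr rfl fun b _ => ?_
    rw [hsymm b a]; ring
  have expand : ∑ x, ∑ y, (f y - f x)*(g y - g x)*w x y
      = ∑ x, ∑ y, f y * (g y - g x) * w x y - ∑ x, ∑ y, f x * (g y - g x) * w x y := by
    rw [← Finset.sum_sub_distrib]
    refine Finset.sum_congr rfl fun a _ => ?_
    rw [← Finset.sum_sub_distrib]
    exact Finset.sum_congr rfl fun b _ => by ring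
  rw [← Finset.mul_sum, expand, swap]
  ring

private lemma bochner (hm : ∀ x, m x ≠ 0) (hsymm : ∀ x y, w x y = w y x) (f g : V → ℝ) :
    ∑ x, m x * gGam2 m w f g x = ∑ x, m x * (glap m w f x * glap m w g x) := by
  have expand : ∀ x, m x * gGam2 m w f g x
      = (1/2) * (m x * glap m w (gGam m w f g) x - m x * gGam m w (glap m w f) g x
          - m x * gGam m w f (glap m w g) x) := fun x => by unfold gGam2; ring
  rw [Finset.sum_congr rfl fun x _ => expand x, ← Finset.mul_sum]
  rw [Finset.sum_sub_distrib, Finset.sum_sub_distrib]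
  rw [sum_glap m w hm hsymm, green m w hm hsymm (glap m w f) g]
  have h3 : ∑ x, m x * gGam m w f (glap m w g) x = - ∑ x, m x * (glap m w g x * glap m w f x) := by
    rw [Finset.sum_congr rfl fun x _ => by rw [gGam_comm m w f (glap m w g) x]]
    exact green m w hm hsymm (glap m w g) f
  have h4 : ∑ x, m x * (glap m w g x * glap m w f x) = ∑ x, m x * (glap m w f x * glap m w g x) :=
    Finset.sum_congr rfl fun x _ => by ring
  rw [h4] at h3
  rw [h3]
  ring

private lemma glap_lin (a b : V → ℝ) (t : ℝ) (x : V) :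
    glap m w (fun v => a v + t * b v) x = glap m w a x + t * glap m w b x := by
  unfold glap
  rw [show (1 / m x) * (∑ y, (a y - a x) * w x y) + t * ((1/m x) * ∑ y, (b y - b x)*w x y)
      = (1/m x) * ((∑ y, (a y - a x) * w x y) + t * ∑ y, (b y - b x)*w x y) from by ring]
  congr 1
  rw [Finset.mul_sum, ← Finset.sum_add_distrib]
  exact Finset.sum_congr rfl fun y _ => by ring

private lemma glap_lin3 (a b cc : V → ℝ) (s t : ℝ) (x : V) :
    glap m w (fun v => a v + (s * b v + t * cc v)) x
      = glap m w a x + (s * glap m w b x + t * glap m w cc x) := by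
  unfold glap
  rw [show (1 / m x) * (∑ y, (a y - a x) * w x y)
        + (s * ((1/m x) * ∑ y, (b y - b x)*w x y) + t * ((1/m x) * ∑ y, (cc y - cc x)*w x y))
      = (1/m x) * ((∑ y, (a y - a x) * w x y)
        + (s * (∑ y, (b y - b x)*w x y) + t * ∑ y, (cc y - cc x)*w x y)) from by ring]
  congr 1
  rw [Finset.mul_sum, Finset.mul_sum, ← Finset.sum_add_distrib, ← Finset.sum_add_distrib]
  exact Finset.sum_congr rfl fun y _ => by ring

private lemma gGam_expand (hm : ∀ x, m x ≠ 0) (a b p q : V → ℝ) (s t : ℝ) (x : V) :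
    gGam m w (fun v => a v + s * b v) (fun v => p v + t * q v) x =
      gGam m w a p x + t * gGam m w a q x + s * gGam m w b p x + s*t*gGam m w b q x := by
  rw [gGam_eq' m w _ _ x (hm x), gGam_eq' m w a p x (hm x), gGam_eq' m w a q x (hm x),
    gGam_eq' m w b p x (hm x), gGam_eq' m w b q x (hm x)]
  rw [show ∀ S1 S2 S3 S4 : ℝ, 1/(2*m x) * S1 + t * (1/(2*m x) * S2) + s * (1/(2*m x) * S3)
      + s*t*(1/(2*m x) * S4) = 1/(2*m x) * (S1 + t*S2 + s*S3 + s*t*S4) from fun _ _ _ _ => by ring]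
  congr 1
  rw [Finset.mul_sum Finset.univ (fun y => (b y - b x) * (q y - q x) * w x y) (s*t),
    Finset.mul_sum Finset.univ (fun y => (b y - b x) * (p y - p x) * w x y) s,
    Finset.mul_sum Finset.univ (fun y => (a y - a x) * (q y - q x) * w x y) t,
    ← Finset.sum_add_distrib, ← Finset.sum_add_distrib, ← Finset.sum_add_distrib]
  exact Finset.sum_congr rfl fun y _ => by ring

private lemma gGam_quad (hm : ∀ x, m x ≠ 0) (u g : V → ℝ) (t : ℝ) (x : V) :
    gGam m w (fun v => u v + t * g v) (fun v => u v + t * g v) x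
      = gGam m w u u x + 2*t*gGam m w u g x + t^2 * gGam m w g g x := by
  rw [gGam_expand m w hm u g u g t t x, gGam_comm m w g u x]
  ring

private lemma gGam2_quad (hm : ∀ x, m x ≠ 0) (u g : V → ℝ) (t : ℝ) (x : V) :
    gGam2 m w (fun v => u v + t * g v) (fun v => u v + t * g v) x
      = gGam2 m w u u x + 2*t*gGam2 m w u g x + t^2 * gGam2 m w g g x := by
  have hGF : gGam m w (fun v => u v + t * g v) (fun v => u v + t * g v)
      = fun z => gGam m w u u z + ((2*t) * gGam m w u g z + (t^2) * gGam m w g g z) := by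
    funext z
    rw [gGam_expand m w hm u g u g t t z, gGam_comm m w g u z]
    ring
  have hLF : glap m w (fun v => u v + t * g v) = fun z => glap m w u z + t * glap m w g z :=
    funext fun z => glap_lin m w u g t z
  unfold gGam2
  rw [hGF, hLF]
  rw [glap_lin3 m w (gGam m w u u) (gGam m w u g) (gGam m w g g) (2*t) (t^2) x]
  rw [gGam_expand m w hm (glap m w u) (glap m w g) u g t t x]
  rw [gGam_comm m w (fun v => u v + t * g v) (fun z => glap m w u z + t * glap m w g z) x]
  rw [gGam_expand m w hm (glap m w u) (glap m w g) u g t t x]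
  rw [gGam_comm m w u (glap m w u) x, gGam_comm m w u (glap m w g) x,
    gGam_comm m w g (glap m w g) x]
  ring

private lemma quad_zero {A B : ℝ} (hA : 0 ≤ A) (h : ∀ t : ℝ, 0 ≤ 2*t*B + t^2*A) : B = 0 := by
  by_contra hB
  have h1 := h (-(B/(A+1)))
  have hA1 : (0:ℝ) < A + 1 := by linarith
  have key : 2*(-(B/(A+1)))*B + (-(B/(A+1)))^2*A = (B^2/(A+1)^2) * (A - 2*(A+1)) := by
    field_simp; ring
  rw [key] at h1
  have hBB : 0 < B^2/(A+1)^2 := by positivity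
  nlinarith

private lemma reach_closed (G : SimpleGraph V) {P : V → Prop}
    (hcl : ∀ a b, P a → G.Adj a b → P b) :
    ∀ {a b : V}, G.Walk a b → P a → P b := by
  intro a b p
  induction p with
  | nil => exact id
  | cons h q ih => exact fun ha => ih (hcl _ _ ha h)

private lemma sum_delta_mul (s : V) (F : V → ℝ) :
    ∑ y, (if y = s then (1:ℝ) else 0) * F y = F s := by
  rw [Finset.sum_congr rfl (fun y _ => show (if y = s then (1:ℝ) else 0) * F y
    = if y = s then F y else 0 from by split <;> ring)]
  rw [Finset.sum_ite_eq' Finset.univ s F, if_pos (Finset.mem_univ s)]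

end StmtAux

open ENNReal in
/-- rigidity for normalized weight: if `Deg(x) = 1` for all `x`,
`CD(K,n)` holds with `K > 0`, `n > 1` (possibly `n = ∞`) and `σ₂ = nK/(n-1)`,
then `n = ∞`, `K = 1`, the interior induces no edges, and `Deg_b(x) = 1` for
every interior vertex. -/
theorem stmt18 (m : V → ℝ) (w : V → V → ℝ) (B : Finset V) (hW : WeightedGraph m w)
    (hconn : (wgraph w).Connected) (hB : GraphBoundary w B)
    (hnorm : ∀ x, (1 / m x) * ∑ y, w x y = 1)
    (K : ℝ) (n : ℝ≥0∞) (hK : 0 < K) (hn : 1 < n)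
    (hCD : CDE m w K n)
    (hs1 : SteklovEig m w B (lich n K))
    (hs2 : ∀ σ : ℝ, SteklovEig m w B σ → 0 < σ → lich n K ≤ σ) :
    n = ⊤ ∧ K = 1 ∧
    (∀ x, x ∉ B → ∀ y, y ∉ B → w x y = 0) ∧
    (∀ x, x ∉ B → (1 / m x) * ∑ y ∈ B, w x y = 1) := by
  obtain ⟨hm, hsymm, hnn, hloop⟩ := hW
  have hm' : ∀ x, m x ≠ 0 := fun x => ne_of_gt (hm x)
  have hsum : ∀ x, ∑ y, w x y = m x := by
    intro x
    have h := hnorm x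
    field_simp [hm' x] at h
    linarith [h]
  obtain ⟨hBne, hBind, hBadj⟩ := hB
  -- rename constants
  obtain ⟨c, hc_def⟩ : ∃ c, cdC n = c := ⟨_, rfl⟩
  obtain ⟨σ, hσ_def⟩ : ∃ σ, lich n K = σ := ⟨_, rfl⟩
  have hCD' : ∀ (f : V → ℝ) (x : V),
      gGam2 m w f f x ≥ c * (glap m w f x) ^ 2 + K * gGam m w f f x := by
    intro f x; rw [← hc_def]; exact hCD f x
  -- ENNReal facts
  have hn0 : n ≠ 0 := by
    intro h
    rw [h] at hn
    simp at hn
  have hc0 : (0:ℝ) ≤ c := by rw [← hc_def]; exact ENNReal.toReal_nonneg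
  have hninv_ne : n⁻¹ ≠ ⊤ := by
    rw [Ne, ENNReal.inv_eq_top]
    exact hn0
  have hc1 : c < 1 := by
    rw [← hc_def]
    have h1 : n⁻¹ < 1 := ENNReal.inv_lt_one.mpr hn
    have := (ENNReal.toReal_lt_toReal hninv_ne ENNReal.one_ne_top).mpr h1
    simpa [cdC, ENNReal.toReal_inv] using this
  have hσK : K = σ * (1 - c) ∧ 0 < σ := by
    by_cases htop : n = ⊤
    · have hcc : c = 0 := by rw [← hc_def, htop]; simp [cdC]
      have hss : σ = K := by rw [← hσ_def, htop]; simp [lich]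
      exact ⟨by rw [hcc, hss]; ring, by rw [hss]; exact hK⟩
    · have hT1 : 1 < n.toReal := by
        have := (ENNReal.toReal_lt_toReal ENNReal.one_ne_top htop).mpr hn
        simpa using this
      have hcc : c = (n.toReal)⁻¹ := by rw [← hc_def]; simp [cdC, ENNReal.toReal_inv]
      have hss : σ = n.toReal * K / (n.toReal - 1) := by rw [← hσ_def]; simp [lich, htop]
      constructor
      · rw [hcc, hss]
        have h1 : n.toReal ≠ 0 := by linarith
        have h2 : n.toReal - 1 ≠ 0 := by intro h; rw [sub_eq_zero] at h; linarith [h]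
        field_simp
        try ring
      · rw [hss]
        apply div_pos
        · exact mul_pos (by linarith) hK
        · linarith
  obtain ⟨hKσ, hσpos⟩ := hσK
  -- Steklov eigenfunction
  rw [hσ_def] at hs1
  obtain ⟨u, ⟨s₀, hs₀B, hs₀u⟩, hharm, hstek⟩ := hs1
  have hglapB : ∀ x ∈ B, glap m w u x = -(σ * u x) := fun x hx => by
    have := hstek x hx; linarith
  -- equality chain
  have hsum_sq : ∑ x, m x * (glap m w u x * glap m w u x) = σ^2 * ∑ x ∈ B, u x ^ 2 * m x := by
    have h1 : ∑ x ∈ B, m x * (glap m w u x * glap m w u x)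
        = ∑ x, m x * (glap m w u x * glap m w u x) :=
      Finset.sum_subset (Finset.subset_univ B) (fun x _ hx => by rw [hharm x hx]; ring)
    rw [← h1, Finset.sum_congr rfl (fun x hx => by rw [hglapB x hx]; ring :
      ∀ x ∈ B, m x * (glap m w u x * glap m w u x) = σ^2 * (u x ^ 2 * m x)), ← Finset.mul_sum]
  have hsum_ug : ∑ x, m x * (u x * glap m w u x) = -(σ * ∑ x ∈ B, u x ^ 2 * m x) := by
    have h1 : ∑ x ∈ B, m x * (u x * glap m w u x) = ∑ x, m x * (u x * glap m w u x) :=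
      Finset.sum_subset (Finset.subset_univ B) (fun x _ hx => by rw [hharm x hx]; ring)
    rw [← h1, Finset.sum_congr rfl (fun x hx => by rw [hglapB x hx]; ring :
      ∀ x ∈ B, m x * (u x * glap m w u x) = -(σ * (u x ^ 2 * m x)))]
    rw [Finset.sum_neg_distrib, ← Finset.mul_sum]
  have hsum_Qd : ∑ x, m x * (gGam2 m w u u x - (c * (glap m w u x)^2 + K * gGam m w u u x))
      = 0 := by
    have e : ∀ x, m x * (gGam2 m w u u x - (c * (glap m w u x)^2 + K * gGam m w u u x))
        = m x * gGam2 m w u u x - c * (m x * (glap m w u x * glap m w u x))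
          - K * (m x * gGam m w u u x) := fun x => by ring
    rw [Finset.sum_congr rfl fun x _ => e x]
    rw [Finset.sum_sub_distrib, Finset.sum_sub_distrib, ← Finset.mul_sum, ← Finset.mul_sum]
    rw [bochner m w hm' hsymm u u, green m w hm' hsymm u u, hsum_sq, hsum_ug, hKσ]
    ring
  have hQd0 : ∀ x, gGam2 m w u u x = c * (glap m w u x)^2 + K * gGam m w u u x := by
    intro x
    have hterms : ∀ x ∈ Finset.univ,
        (0:ℝ) ≤ m x * (gGam2 m w u u x - (c * (glap m w u x)^2 + K * gGam m w u u x)) :=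
      fun x _ => mul_nonneg (le_of_lt (hm x)) (by linarith [hCD' u x])
    have h := (Finset.sum_eq_zero_iff_of_nonneg hterms).mp hsum_Qd x (Finset.mem_univ x)
    rcases mul_eq_zero.mp h with h' | h'
    · exact absurd h' (hm' x)
    · linarith
  -- polarization
  have hQb : ∀ (g : V → ℝ) (x : V), gGam2 m w u g x
      = c * (glap m w u x * glap m w g x) + K * gGam m w u g x := by
    intro g x
    have hAg : (0:ℝ) ≤ gGam2 m w g g x - (c * (glap m w g x)^2 + K * gGam m w g g x) := by
      linarith [hCD' g x]
    have hq : ∀ t : ℝ, 0 ≤ 2*t*(gGam2 m w u g x - (c * (glap m w u x * glap m w g x)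
        + K * gGam m w u g x))
        + t^2*(gGam2 m w g g x - (c * (glap m w g x)^2 + K * gGam m w g g x)) := by
      intro t
      have hF := hCD' (fun v => u v + t * g v) x
      rw [gGam2_quad m w hm' u g t x, gGam_quad m w hm' u g t x, glap_lin m w u g t x] at hF
      have hid : 2*t*(gGam2 m w u g x - (c * (glap m w u x * glap m w g x)
          + K * gGam m w u g x))
          + t^2*(gGam2 m w g g x - (c * (glap m w g x)^2 + K * gGam m w g g x))
          = (gGam2 m w u u x + 2*t*gGam2 m w u g x + t^2 * gGam2 m w g g x)
            - (c * (glap m w u x + t * glap m w g x)^2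
              + K * (gGam m w u u x + 2*t*gGam m w u g x + t^2 * gGam m w g g x))
            - (gGam2 m w u u x - (c * (glap m w u x)^2 + K * gGam m w u u x)) := by ring
      rw [hid]
      have hq0 := hQd0 x
      linarith [hF]
    have := quad_zero hAg hq
    linarith
  -- global identity
  have hGlob : ∀ g : V → ℝ,
      (1-c) * (∑ x, m x * (glap m w u x * glap m w g x))
        + K * (∑ x, m x * (g x * glap m w u x)) = 0 := by
    intro g
    have h0 : ∑ x, m x * (gGam2 m w u g x
        - (c * (glap m w u x * glap m w g x) + K * gGam m w u g x)) = 0 :=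
      Finset.sum_eq_zero fun x _ => by rw [hQb g x]; ring
    have e : ∀ x, m x * (gGam2 m w u g x
        - (c * (glap m w u x * glap m w g x) + K * gGam m w u g x))
        = m x * gGam2 m w u g x - c * (m x * (glap m w u x * glap m w g x))
          - K * (m x * gGam m w u g x) := fun x => by ring
    rw [Finset.sum_congr rfl fun x _ => e x, Finset.sum_sub_distrib, Finset.sum_sub_distrib,
      ← Finset.mul_sum, ← Finset.mul_sum, bochner m w hm' hsymm u g] at h0
    have hcm : ∑ x, m x * gGam m w u g x = - ∑ x, m x * (g x * glap m w u x) := by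
      rw [Finset.sum_congr rfl fun x _ => by rw [gGam_comm m w u g x]]
      exact green m w hm' hsymm g u
    rw [hcm] at h0
    linarith [h0]
  -- K = 1 - c and σ = 1
  have hKc : K = 1 - c := by
    have hE := hGlob (fun v => if v = s₀ then (1:ℝ) else 0)
    have hE1 : ∑ x, m x * (glap m w u x * glap m w (fun v => if v = s₀ then (1:ℝ) else 0) x)
        = σ * (u s₀ * m s₀) := by
      have h1 : ∑ x ∈ B, m x * (glap m w u x * glap m w (fun v => if v = s₀ then (1:ℝ) else 0) x)
          = ∑ x, m x * (glap m w u x * glap m w (fun v => if v = s₀ then (1:ℝ) else 0) x) :=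
        Finset.sum_subset (Finset.subset_univ B) (fun x _ hx => by rw [hharm x hx]; ring)
      rw [← h1]
      have h2 : ∀ x ∈ B, m x * (glap m w u x * glap m w (fun v => if v = s₀ then (1:ℝ) else 0) x)
          = if x = s₀ then σ * (u x * m x) else 0 := by
        intro x hx
        rw [hglapB x hx, glap_split m w _ x (hm' x) (hsum x)]
        rw [show ∑ y, (if y = s₀ then (1:ℝ) else 0) * w x y = w x s₀ from
          sum_delta_mul s₀ (fun y => w x y)]
        rw [hBind x hx s₀ hs₀B]
        split
        · next h => ring
        · next h => ring
      rw [Finset.sum_congr rfl h2, Finset.sum_ite_eq' B s₀ (fun x => σ * (u x * m x)),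
        if_pos hs₀B]
    have hE2 : ∑ x, m x * ((if x = s₀ then (1:ℝ) else 0) * glap m w u x)
        = -(σ * (u s₀ * m s₀)) := by
      have h2 : ∀ x, m x * ((if x = s₀ then (1:ℝ) else 0) * glap m w u x)
          = if x = s₀ then m x * glap m w u x else 0 := fun x => by split <;> ring
      rw [Finset.sum_congr rfl fun x _ => h2 x,
        Finset.sum_ite_eq' Finset.univ s₀ (fun x => m x * glap m w u x),
        if_pos (Finset.mem_univ s₀), hglapB s₀ hs₀B]
      ring
    rw [hE1, hE2] at hE
    have hfact : (1 - c - K) * (σ * (u s₀ * m s₀)) = 0 := by linarith [hE]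
    rcases mul_eq_zero.mp hfact with h | h
    · linarith
    · exact absurd h (mul_ne_zero (ne_of_gt hσpos) (mul_ne_zero hs₀u (hm' s₀)))
  have hc1' : (1:ℝ) - c ≠ 0 := by intro h; rw [sub_eq_zero] at h; rw [← h] at hc1; linarith
  have hσ1 : σ = 1 := by
    have h : σ * (1-c) = 1 * (1-c) := by rw [← hKσ, hKc]; ring
    exact mul_right_cancel₀ hc1' h
  -- boundary pairing vanishes into the interior
  have hF2 : ∀ s, s ∉ B → ∑ x ∈ B, u x * w x s = 0 := by
    intro s hs
    have hE := hGlob (fun v => if v = s then (1:ℝ) else 0)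
    have hE1 : ∑ x, m x * (glap m w u x * glap m w (fun v => if v = s then (1:ℝ) else 0) x)
        = -(σ * ∑ x ∈ B, u x * w x s) := by
      have h1 : ∑ x ∈ B, m x * (glap m w u x * glap m w (fun v => if v = s then (1:ℝ) else 0) x)
          = ∑ x, m x * (glap m w u x * glap m w (fun v => if v = s then (1:ℝ) else 0) x) :=
        Finset.sum_subset (Finset.subset_univ B) (fun x _ hx => by rw [hharm x hx]; ring)
      rw [← h1]
      have h2 : ∀ x ∈ B, m x * (glap m w u x * glap m w (fun v => if v = s then (1:ℝ) else 0) x)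
          = -(σ * (u x * w x s)) := by
        intro x hx
        rw [hglapB x hx, glap_split m w _ x (hm' x) (hsum x)]
        rw [show ∑ y, (if y = s then (1:ℝ) else 0) * w x y = w x s from
          sum_delta_mul s (fun y => w x y)]
        rw [if_neg (by rintro rfl; exact hs hx)]
        field_simp [hm' x]
        ring
      rw [Finset.sum_congr rfl h2, Finset.sum_neg_distrib, ← Finset.mul_sum]
    have hE2 : ∑ x, m x * ((if x = s then (1:ℝ) else 0) * glap m w u x) = 0 := by
      have h2 : ∀ x, m x * ((if x = s then (1:ℝ) else 0) * glap m w u x)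
          = if x = s then m x * glap m w u x else 0 := fun x => by split <;> ring
      rw [Finset.sum_congr rfl fun x _ => h2 x,
        Finset.sum_ite_eq' Finset.univ s (fun x => m x * glap m w u x),
        if_pos (Finset.mem_univ s), hharm s hs]
      ring
    rw [hE1, hE2] at hE
    have hfact : ((1-c) * σ) * (∑ x ∈ B, u x * w x s) = 0 := by linarith [hE]
    rcases mul_eq_zero.mp hfact with h | h
    · exact absurd h (mul_ne_zero hc1' (ne_of_gt hσpos))
    · exact h
  -- adjacency helpers
  have hadjw : ∀ a b : V, (wgraph w).Adj a b → 0 < w a b := by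
    intro a b h
    rw [wgraph, SimpleGraph.fromRel_adj] at h
    rcases h.2 with h' | h'
    · exact h'
    · rwa [hsymm b a] at h'
  -- maximum principle
  have hmaxp : ∀ v : V → ℝ, (∀ x, x ∉ B → ∑ y, v y * w x y = v x * m x) →
      (∀ s, s ∉ B → ∑ x ∈ B, v x * w x s = 0) → ∀ s, s ∉ B → v s ≤ 0 := by
    intro v hv1 hv2
    by_contra hcon
    push_neg at hcon
    obtain ⟨s₁, hs₁B, hs₁pos⟩ := hcon
    have hs₁Ω : s₁ ∈ Bᶜ := Finset.mem_compl.mpr hs₁B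
    have hΩne : ((Bᶜ : Finset V).image v).Nonempty := ⟨v s₁, Finset.mem_image_of_mem v hs₁Ω⟩
    set M := ((Bᶜ : Finset V).image v).max' hΩne with hM
    have hMmax : ∀ y, y ∉ B → v y ≤ M := fun y hy =>
      Finset.le_max' _ _ (Finset.mem_image_of_mem v (Finset.mem_compl.mpr hy))
    have hMpos : 0 < M := lt_of_lt_of_le hs₁pos (hMmax s₁ hs₁B)
    obtain ⟨s₂, hs₂Ω, hs₂v⟩ := Finset.mem_image.mp (Finset.max'_mem _ hΩne)
    have hclose : ∀ a b : V, (a ∉ B ∧ v a = M) → (wgraph w).Adj a b → (b ∉ B ∧ v b = M) := by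
      rintro a b ⟨haB, haM⟩ hab
      have hwab : 0 < w a b := hadjw a b hab
      have h1 : ∑ y ∈ B, v y * w a y + ∑ y ∈ Bᶜ, v y * w a y = v a * m a := by
        rw [Finset.sum_add_sum_compl]
        exact hv1 a haB
      have h2 : ∑ y ∈ B, v y * w a y = 0 := by
        rw [Finset.sum_congr rfl (fun y _ => by rw [hsymm a y] :
          ∀ y ∈ B, v y * w a y = v y * w y a)]
        exact hv2 a haB
      have h3 : ∑ y ∈ B, w a y + ∑ y ∈ Bᶜ, w a y = m a := by
        rw [Finset.sum_add_sum_compl]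
        exact hsum a
      have h4 : ∑ y ∈ Bᶜ, (M - v y) * w a y + M * ∑ y ∈ B, w a y = 0 := by
        have e1 : ∑ y ∈ Bᶜ, (M - v y) * w a y
            = M * ∑ y ∈ Bᶜ, w a y - ∑ y ∈ Bᶜ, v y * w a y := by
          rw [Finset.mul_sum, ← Finset.sum_sub_distrib]
          exact Finset.sum_congr rfl fun y _ => by ring
        have e2 : ∑ y ∈ Bᶜ, v y * w a y = M * m a := by rw [← haM]; linarith [h1, h2]
        rw [e1, e2]
        have e3 : M * (∑ y ∈ B, w a y + ∑ y ∈ Bᶜ, w a y) = M * m a := by rw [h3]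
        linarith [e3]
      have h5 : ∀ y ∈ (Bᶜ : Finset V), 0 ≤ (M - v y) * w a y := fun y hy =>
        mul_nonneg (by linarith [hMmax y (Finset.mem_compl.mp hy)]) (hnn a y)
      have h5' : (0:ℝ) ≤ ∑ y ∈ Bᶜ, (M - v y) * w a y := Finset.sum_nonneg h5
      have h6 : (0:ℝ) ≤ M * ∑ y ∈ B, w a y :=
        mul_nonneg (le_of_lt hMpos) (Finset.sum_nonneg fun y _ => hnn a y)
      have h7a : ∑ y ∈ Bᶜ, (M - v y) * w a y = 0 := by linarith
      have h7b : M * ∑ y ∈ B, w a y = 0 := by linarith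
      have hbB : b ∉ B := by
        intro hbB
        have hsB0 : ∑ y ∈ B, w a y = 0 := by
          rcases mul_eq_zero.mp h7b with h | h
          · exact absurd h (ne_of_gt hMpos)
          · exact h
        have : w a b ≤ ∑ y ∈ B, w a y := Finset.single_le_sum (fun y _ => hnn a y) hbB
        linarith
      refine ⟨hbB, ?_⟩
      have := (Finset.sum_eq_zero_iff_of_nonneg h5).mp h7a b (Finset.mem_compl.mpr hbB)
      rcases mul_eq_zero.mp this with h | h
      · linarith
      · exact absurd h (ne_of_gt hwab)
    obtain ⟨b₀, hb₀⟩ := hBne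
    obtain ⟨p⟩ := hconn.preconnected s₂ b₀
    exact (reach_closed (wgraph w) hclose p ⟨Finset.mem_compl.mp hs₂Ω, hs₂v⟩).1 hb₀
  -- u vanishes on the interior
  have hv1u : ∀ x, x ∉ B → ∑ y, u y * w x y = u x * m x := by
    intro x hx
    have h := glap_split m w u x (hm' x) (hsum x)
    rw [hharm x hx] at h
    have h2 : (1 / m x) * (∑ y, u y * w x y) = u x := by linarith
    field_simp [hm' x] at h2
    linarith [h2]
  have hu0 : ∀ x, x ∉ B → u x = 0 := by
    intro x hx
    have hle := hmaxp u hv1u hF2 x hx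
    have hge := hmaxp (fun z => -u z)
      (fun z hz => by
        rw [Finset.sum_congr rfl fun y _ => (neg_mul (u y) (w z y)),
          Finset.sum_neg_distrib, hv1u z hz]
        ring)
      (fun s hs => by
        rw [Finset.sum_congr rfl fun y _ => (neg_mul (u y) (w y s)),
          Finset.sum_neg_distrib, hF2 s hs]
        ring)
      x hx
    simp at hge
    linarith
  -- u is a (-1)-eigenfunction
  have hΔu : ∀ z, glap m w u z = -u z := by
    intro z
    by_cases hz : z ∈ B
    · rw [hglapB z hz, hσ1]; ring
    · rw [hharm z hz, hu0 z hz]; ring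
  have hU : ∀ x, ∑ y, u y * w x y = 0 := by
    intro x
    have h := glap_split m w u x (hm' x) (hsum x)
    rw [hΔu x] at h
    have h2 : (1 / m x) * (∑ y, u y * w x y) = 0 := by linarith
    rcases mul_eq_zero.mp h2 with h' | h'
    · exact absurd h' (by simp [hm' x])
    · exact h'
  have hkill : ∀ s ∈ B, ∀ y, u y * w y s = 0 := by
    intro s hs y
    by_cases hy : y ∈ B
    · rw [hBind y hy s hs]; ring
    · rw [hu0 y hy]; ring
  -- the key identity from the pointwise equality, tested against g = δ_s
  have hsum_uw : ∀ z, ∑ y, (u y - u z) * w z y = -(u z * m z) := by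
    intro z
    have h := glap_mul m w u z (hm' z)
    rw [hΔu z] at h
    linarith
  have hkey : ∀ s, s ∈ B → ∀ x, x ≠ s →
      (u s + u x) * ((∑ y, w x y * (1 / m y * w y s)) + 2*c*w x s) = 0 := by
    intro s hsB x hxs
    have hδlap : ∀ z, glap m w (fun v => if v = s then (1:ℝ) else 0) z
        = 1 / m z * w z s - (if z = s then 1 else 0) := by
      intro z
      rw [glap_split m w _ z (hm' z) (hsum z),
        show ∑ y, (if y = s then (1:ℝ) else 0) * w z y = w z s from
          sum_delta_mul s (fun y => w z y)]
    have hp2 : ∀ z, gGam m w u (fun v => if v = s then (1:ℝ) else 0) z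
        = (1/2) * (1 / m z * ((u s - u z) * w z s)) + (if z = s then u z / 2 else 0) := by
      intro z
      rw [gGam_eq2 m w u _ z (hm' z)]
      have hsplit : ∑ y, (u y - u z) * ((if y = s then (1:ℝ) else 0)
            - (if z = s then (1:ℝ) else 0)) * w z y
          = (∑ y, (if y = s then (1:ℝ) else 0) * ((u y - u z) * w z y))
            - (if z = s then (1:ℝ) else 0) * ∑ y, (u y - u z) * w z y := by
        rw [Finset.mul_sum, ← Finset.sum_sub_distrib]
        exact Finset.sum_congr rfl fun y _ => by ring
      rw [hsplit, sum_delta_mul s (fun y => (u y - u z) * w z y), hsum_uw z]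
      split
      · next h =>
          subst h
          field_simp [hm']
          ring
      · next h => ring
    have hFx : gGam m w u (fun v => if v = s then (1:ℝ) else 0) x
        = (1/2) * (1 / m x * ((u s - u x) * w x s)) := by
      rw [hp2 x, if_neg hxs]; ring
    have hFxm : m x * gGam m w u (fun v => if v = s then (1:ℝ) else 0) x
        = (1/2) * ((u s - u x) * w x s) := by
      rw [hFx, show (1:ℝ)/2 * (1 / m x * ((u s - u x) * w x s))
          = 1/(2 * m x) * ((u s - u x) * w x s) from by
        rw [← mul_assoc, one_div_mul_one_div]]
      exact hcan1 (m x) ((u s - u x) * w x s) (hm' x)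
    have hDx : glap m w (fun v => if v = s then (1:ℝ) else 0) x = 1 / m x * w x s := by
      rw [hδlap x, if_neg hxs]; ring
    have hDxm : m x * glap m w (fun v => if v = s then (1:ℝ) else 0) x = w x s := by
      rw [hDx]
      exact hcan3 (m x) (w x s) (hm' x)
    have hp3m : m x * glap m w (gGam m w u (fun v => if v = s then (1:ℝ) else 0)) x
        = (1/2) * (u s * (∑ y, w x y * (1 / m y * w y s)) + u x * w x s) := by
      rw [glap_mul m w _ x (hm' x)]
      have hsplit2 : ∑ y, (gGam m w u (fun v => if v = s then (1:ℝ) else 0) y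
            - gGam m w u (fun v => if v = s then (1:ℝ) else 0) x) * w x y
          = (∑ y, gGam m w u (fun v => if v = s then (1:ℝ) else 0) y * w x y)
            - gGam m w u (fun v => if v = s then (1:ℝ) else 0) x * m x := by
        rw [← hsum x, Finset.mul_sum, ← Finset.sum_sub_distrib]
        exact Finset.sum_congr rfl fun y _ => by ring
      have hsum1 : ∑ y, gGam m w u (fun v => if v = s then (1:ℝ) else 0) y * w x y
          = (u s / 2) * (∑ y, w x y * (1 / m y * w y s)) + (u s / 2) * w x s := by
        have e : ∀ y, gGam m w u (fun v => if v = s then (1:ℝ) else 0) y * w x y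
            = ((u s / 2) * (w x y * (1 / m y * w y s))
                - ((1/2) * (1 / m y * w x y)) * (u y * w y s))
              + (if y = s then (1:ℝ) else 0) * ((u y / 2) * w x y) := by
          intro y
          rw [hp2 y]
          split <;> ring
        rw [Finset.sum_congr rfl fun y _ => e y, Finset.sum_add_distrib,
          Finset.sum_sub_distrib, sum_delta_mul s (fun y => (u y / 2) * w x y)]
        have z2 : ∑ y, ((1/2) * (1 / m y * w x y)) * (u y * w y s) = 0 :=
          Finset.sum_eq_zero fun y _ => by rw [hkill s hsB y]; ring
        rw [z2, ← Finset.mul_sum]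
        ring
      rw [hsplit2, hsum1, mul_comm (gGam m w u (fun v => if v = s then (1:ℝ) else 0) x) (m x),
        hFxm]
      ring
    have hδfun : glap m w (fun v => if v = s then (1:ℝ) else 0)
        = fun z => 1 / m z * w z s - (if z = s then (1:ℝ) else 0) := funext hδlap
    have hp5m : m x * gGam m w u (glap m w (fun v => if v = s then (1:ℝ) else 0)) x
        = (1/2) * (-(u x * (∑ y, w x y * (1 / m y * w y s)))
            - u s * w x s + 2 * (u x * w x s)) := by
      rw [hδfun, gGam_eq2 m w u _ x (hm' x)]
      rw [show m x * ((1/2) * (1 / m x * ∑ y, (u y - u x) * ((1 / m y * w y s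
            - (if y = s then (1:ℝ) else 0)) - (1 / m x * w x s
            - (if x = s then (1:ℝ) else 0))) * w x y))
          = (1/2) * (m x * (1 / m x * ∑ y, (u y - u x) * ((1 / m y * w y s
            - (if y = s then (1:ℝ) else 0)) - (1 / m x * w x s
            - (if x = s then (1:ℝ) else 0))) * w x y)) from by ring]
      rw [hcan3 (m x) _ (hm' x)]
      have e : ∀ y, (u y - u x) * ((1 / m y * w y s - (if y = s then (1:ℝ) else 0))
            - (1 / m x * w x s - (if x = s then (1:ℝ) else 0))) * w x y
          = ((1 / m y * (w x y * (u y * w y s)) - u x * (w x y * (1 / m y * w y s)))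
              - (if y = s then (1:ℝ) else 0) * ((u y - u x) * w x y))
            - (1 / m x * w x s) * ((u y - u x) * w x y) := by
        intro y
        rw [if_neg hxs]
        split <;> ring
      rw [Finset.sum_congr rfl fun y _ => e y, Finset.sum_sub_distrib, Finset.sum_sub_distrib,
        Finset.sum_sub_distrib, sum_delta_mul s (fun y => (u y - u x) * w x y)]
      have z1 : ∑ y, 1 / m y * (w x y * (u y * w y s)) = 0 :=
        Finset.sum_eq_zero fun y _ => by rw [hkill s hsB y]; ring
      rw [z1, ← Finset.mul_sum, ← Finset.mul_sum, hsum_uw x]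
      have hcc2 : 1 / m x * w x s * -(u x * m x) = -(u x * w x s) := by
        rw [show 1 / m x * w x s * -(u x * m x)
            = -((m x * (1 / m x)) * (u x * w x s)) from by ring,
          mul_one_div_cancel (hm' x)]
        ring
      rw [hcc2]
      ring
    have hfu : glap m w u = fun z => -u z := funext hΔu
    have r2 : gGam m w (glap m w u) (fun v => if v = s then (1:ℝ) else 0) x
        = - gGam m w u (fun v => if v = s then (1:ℝ) else 0) x := by
      rw [hfu]
      exact gGam_neg m w u _ x (hm' x)
    have h0 := hQb (fun v => if v = s then (1:ℝ) else 0) x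
    unfold gGam2 at h0
    rw [r2] at h0
    have h0m : (1/2) * ((m x * glap m w (gGam m w u (fun v => if v = s then (1:ℝ) else 0)) x)
          + (m x * gGam m w u (fun v => if v = s then (1:ℝ) else 0) x)
          - (m x * gGam m w u (glap m w (fun v => if v = s then (1:ℝ) else 0)) x))
        = c * (glap m w u x * (m x * glap m w (fun v => if v = s then (1:ℝ) else 0) x))
          + K * (m x * gGam m w u (fun v => if v = s then (1:ℝ) else 0) x) := by
      linear_combination (m x) * h0
    rw [hp3m, hFxm, hDxm, hp5m, hΔu x, hKc] at h0m
    linear_combination 4 * h0m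
  -- c = 0 (hence n = ∞ and K = 1)
  have hterm_nn : ∀ x s y : V, (0:ℝ) ≤ w x y * (1 / m y * w y s) := fun x s y =>
    mul_nonneg (hnn x y) (mul_nonneg (one_div_nonneg.mpr (le_of_lt (hm y))) (hnn y s))
  have hP1 : ∀ s, s ∈ B → u s ≠ 0 → ∀ x, x ∉ B →
      (c * w x s = 0 ∧ ∀ y, w x y * w y s = 0) := by
    intro s hsB hsu x hxB
    have hxs : x ≠ s := fun h => hxB (h ▸ hsB)
    have hk := hkey s hsB x hxs
    rw [hu0 x hxB] at hk
    have hz : (∑ y, w x y * (1 / m y * w y s)) + 2*c*w x s = 0 := by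
      rcases mul_eq_zero.mp hk with h | h
      · exact absurd (by linarith [h] : u s = 0) hsu
      · exact h
    have hRnn : (0:ℝ) ≤ ∑ y, w x y * (1 / m y * w y s) :=
      Finset.sum_nonneg fun y _ => hterm_nn x s y
    have h2 : (0:ℝ) ≤ 2*c*w x s :=
      mul_nonneg (mul_nonneg (by norm_num) hc0) (hnn x s)
    have hR0 : (∑ y, w x y * (1 / m y * w y s)) = 0 := by linarith
    refine ⟨by linarith, ?_⟩
    intro y
    have hy := (Finset.sum_eq_zero_iff_of_nonneg
      (fun y _ => hterm_nn x s y)).mp hR0 y (Finset.mem_univ y)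
    rcases mul_eq_zero.mp hy with h | h
    · rw [h, zero_mul]
    · rcases mul_eq_zero.mp h with h' | h'
      · exact absurd h' (one_div_ne_zero (hm' y))
      · rw [h', mul_zero]
  have hc_zero : c = 0 := by
    obtain ⟨y₀, hy₀B, hy₀w⟩ := hBadj s₀ hs₀B
    have h := (hP1 s₀ hs₀B hs₀u y₀ hy₀B).1
    have hw : 0 < w y₀ s₀ := by rw [hsymm y₀ s₀]; exact hy₀w
    rcases mul_eq_zero.mp h with h' | h'
    · exact h'
    · exact absurd h' (ne_of_gt hw)
  have hntop : n = ⊤ := by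
    have h1 : (n⁻¹).toReal = 0 := by
      have : cdC n = (n⁻¹).toReal := rfl
      rw [← this, hc_def, hc_zero]
    have h2 : n⁻¹ = 0 := by
      rcases ENNReal.toReal_eq_zero_iff _ |>.mp h1 with h | h
      · exact h
      · exact absurd h hninv_ne
    exact ENNReal.inv_eq_zero.mp h2
  have hK1 : K = 1 := by rw [hKc, hc_zero]; ring
  -- no interior edges, via connectivity
  have hclosure : ∀ v : V, (v ∈ B ∧ u v ≠ 0) ∨ (v ∉ B ∧ (∀ y, y ∉ B → w v y = 0)
      ∧ ∃ s, s ∈ B ∧ u s ≠ 0 ∧ 0 < w v s) := by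
    have hcl : ∀ a b : V, ((a ∈ B ∧ u a ≠ 0) ∨ (a ∉ B ∧ (∀ y, y ∉ B → w a y = 0)
        ∧ ∃ s, s ∈ B ∧ u s ≠ 0 ∧ 0 < w a s)) → (wgraph w).Adj a b →
        ((b ∈ B ∧ u b ≠ 0) ∨ (b ∉ B ∧ (∀ y, y ∉ B → w b y = 0)
        ∧ ∃ s, s ∈ B ∧ u s ≠ 0 ∧ 0 < w b s)) := by
      rintro a b (⟨haB, hau⟩ | ⟨haB, hcln, s, hsB, hsu, hws⟩) hab
      · have hwab : 0 < w a b := hadjw a b hab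
        have hbB : b ∉ B := by
          intro hbB
          rw [hBind a haB b hbB] at hwab
          exact lt_irrefl 0 hwab
        right
        refine ⟨hbB, ?_, a, haB, hau, by rwa [hsymm b a]⟩
        intro y hyB
        have h := (hP1 a haB hau y hyB).2 b
        rcases mul_eq_zero.mp h with h' | h'
        · rw [hsymm b y]; exact h'
        · exfalso
          rw [hsymm b a] at h'
          exact (ne_of_gt hwab) h'
      · have hwab : 0 < w a b := hadjw a b hab
        have hbB : b ∈ B := by
          by_contra hbB
          rw [hcln b hbB] at hwab
          exact lt_irrefl 0 hwab
        by_cases hbs : b = s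
        · exact Or.inl ⟨hbB, hbs ▸ hsu⟩
        · left
          refine ⟨hbB, ?_⟩
          have hk := hkey s hsB b hbs
          rw [hBind b hbB s hsB] at hk
          have hRpos : 0 < ∑ y, w b y * (1 / m y * w y s) := by
            refine Finset.sum_pos' (fun y _ => hterm_nn b s y) ⟨a, Finset.mem_univ a, ?_⟩
            have hwa : 0 < w b a := by rw [hsymm b a]; exact hwab
            exact mul_pos hwa (mul_pos (one_div_pos.mpr (hm a)) hws)
          have hsum0 : u s + u b = 0 := by
            rcases mul_eq_zero.mp hk with h | h
            · exact h
            · exfalso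
              have : (∑ y, w b y * (1 / m y * w y s)) = -(2*c*0) := by linarith [h]
              rw [this] at hRpos
              simp at hRpos
          intro hb0
          rw [hb0] at hsum0
          exact hsu (by linarith)
    intro v
    obtain ⟨p⟩ := hconn.preconnected s₀ v
    exact reach_closed (wgraph w) hcl p (Or.inl ⟨hs₀B, hs₀u⟩)
  have hmain3 : ∀ x, x ∉ B → ∀ y, y ∉ B → w x y = 0 := by
    intro x hx y hy
    rcases hclosure x with ⟨hxB, _⟩ | ⟨_, hcln, _⟩
    · exact absurd hxB hx
    · exact hcln y hy
  refine ⟨hntop, hK1, hmain3, ?_⟩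
  intro x hx
  have h1 : ∑ y ∈ B, w x y + ∑ y ∈ Bᶜ, w x y = m x := by
    rw [Finset.sum_add_sum_compl]
    exact hsum x
  have h2 : ∑ y ∈ Bᶜ, w x y = 0 :=
    Finset.sum_eq_zero fun y hy => hmain3 x hx y (Finset.mem_compl.mp hy)
  have h3 : ∑ y ∈ B, w x y = m x := by linarith
  rw [h3, one_div, inv_mul_cancel₀ (hm' x)]
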